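/- Under the setup of the previous statement (E[p_K] = (1 - r·x/(n-k⊥)) · ∏_{i=0}^{k⊥-1} (n-x-i)/(n-i), where k⊥ = ⌊n/η⌋, r = n/η - k⊥, and 1 ≤ x ≤ n, x + k⊥ + 1 ≤ n), it holds that E[p_K] ≤ e^{-x/η}. -/

import Mathlib

theorem expected_avoid_prob_le (n x : ℕ) (η : ℝ) (hx1 : 1 ≤ x) (hxn : x ≤ n)
    (hη : 1 ≤ η) (hηn : η ≤ (n : ℝ))
    (hfit : x + ⌊(n : ℝ) / η⌋₊ + 1 ≤ n) :
    let k : ℕ := ⌊(n : ℝ) / η⌋₊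
    let r : ℝ := (n : ℝ) / η - k
    let p : ℕ → ℝ := fun m => ∏ i ∈ Finset.range m, ((n : ℝ) - x - i) / ((n : ℝ) - i)
    r * p (k + 1) + (1 - r) * p k ≤ Real.exp (-(x : ℝ) / η) := by
  intro k r p
  have hη0 : (0:ℝ) < η := lt_of_lt_of_le one_pos hη
  have hfit' : (x:ℝ) + k + 1 ≤ n := by exact_mod_cast hfit
  have hx1' : (1:ℝ) ≤ x := by exact_mod_cast hx1
  have hn0 : (0:ℝ) < n := by linarith [Nat.cast_nonneg (α := ℝ) k]
  have hnk : (0:ℝ) < (n:ℝ) - k := by linarith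
  have hr0 : 0 ≤ r := sub_nonneg.2 (Nat.floor_le (by positivity))
  have hr1 : r ≤ 1 := by
    have := Nat.lt_floor_add_one ((n:ℝ)/η)
    simp only [r]; push_cast; linarith
  -- each factor is nonneg and ≤ exp(-x/n)
  have hfac_nonneg : ∀ i : ℕ, (i:ℝ) ≤ k → 0 ≤ ((n:ℝ) - x - i) / ((n:ℝ) - i) := by
    intro i hi
    apply div_nonneg <;> linarith
  have hone_sub : ∀ t : ℝ, 1 - t ≤ Real.exp (-t) := by
    intro t
    have := Real.add_one_le_exp (-t)
    linarith
  have hfac_le : ∀ i : ℕ, (i:ℝ) ≤ k → ((n:ℝ) - x - i) / ((n:ℝ) - i) ≤ Real.exp (-(x:ℝ)/n) := by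
    intro i hi
    have hni : (0:ℝ) < (n:ℝ) - i := by linarith
    have h1 : ((n:ℝ) - x - i) / ((n:ℝ) - i) = 1 - (x:ℝ)/((n:ℝ) - i) := by
      field_simp
      ring
    have h2 : (x:ℝ)/n ≤ (x:ℝ)/((n:ℝ)-i) := by
      apply div_le_div_of_nonneg_left (by linarith) hni (by linarith)
    calc ((n:ℝ) - x - i) / ((n:ℝ) - i) ≤ 1 - (x:ℝ)/n := by rw [h1]; linarith
      _ ≤ Real.exp (-((x:ℝ)/n)) := hone_sub _
      _ = Real.exp (-(x:ℝ)/n) := by rw [neg_div]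
  have hpk_nonneg : 0 ≤ p k := by
    apply Finset.prod_nonneg
    intro i hi
    exact hfac_nonneg i (by exact_mod_cast le_of_lt (Finset.mem_range.mp hi))
  have hpk_le : p k ≤ Real.exp (-(k:ℝ) * ((x:ℝ)/n)) := by
    have : p k ≤ ∏ _i ∈ Finset.range k, Real.exp (-(x:ℝ)/n) := by
      apply Finset.prod_le_prod
      · intro i hi
        exact hfac_nonneg i (by exact_mod_cast le_of_lt (Finset.mem_range.mp hi))
      · intro i hi
        exact hfac_le i (by exact_mod_cast le_of_lt (Finset.mem_range.mp hi))
    rw [Finset.prod_const, Finset.card_range, ← Real.exp_nat_mul] at this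
    calc p k ≤ Real.exp (k * (-(x:ℝ)/n)) := this
      _ = Real.exp (-(k:ℝ) * ((x:ℝ)/n)) := by ring_nf
  -- combine
  have hsplit : p (k+1) = p k * (((n:ℝ) - x - k)/((n:ℝ) - k)) := by
    exact Finset.prod_range_succ (fun i => ((n : ℝ) - x - i) / ((n : ℝ) - i)) k
  have hq : ((n:ℝ) - x - k)/((n:ℝ) - k) = 1 - (x:ℝ)/((n:ℝ)-k) := by field_simp; ring
  have hcomb : r * p (k+1) + (1 - r) * p k = p k * (1 - r * ((x:ℝ)/((n:ℝ)-k))) := by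
    rw [hsplit, hq]; ring
  have hxnk : (x:ℝ)/((n:ℝ)-k) ≤ 1 := by
    rw [div_le_one hnk]; linarith
  have hdivnn : 0 ≤ (x:ℝ)/((n:ℝ)-k) := div_nonneg (by linarith) hnk.le
  have hfactor_nonneg : 0 ≤ 1 - r * ((x:ℝ)/((n:ℝ)-k)) := by
    have h := mul_le_mul hr1 hxnk hdivnn zero_le_one
    linarith
  have hfactor_le : 1 - r * ((x:ℝ)/((n:ℝ)-k)) ≤ Real.exp (-(r * ((x:ℝ)/n))) := by
    have h2 : (x:ℝ)/n ≤ (x:ℝ)/((n:ℝ)-k) := by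
      apply div_le_div_of_nonneg_left (by linarith) hnk (by linarith)
    have := hone_sub (r * ((x:ℝ)/((n:ℝ)-k)))
    have hmono : Real.exp (-(r * ((x:ℝ)/((n:ℝ)-k)))) ≤ Real.exp (-(r * ((x:ℝ)/n))) := by
      apply Real.exp_le_exp.2
      have := mul_le_mul_of_nonneg_left h2 hr0
      linarith
    linarith
  calc r * p (k + 1) + (1 - r) * p k
      = p k * (1 - r * ((x:ℝ)/((n:ℝ)-k))) := hcomb
    _ ≤ Real.exp (-(k:ℝ) * ((x:ℝ)/n)) * Real.exp (-(r * ((x:ℝ)/n))) :=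
        mul_le_mul hpk_le hfactor_le hfactor_nonneg (Real.exp_nonneg _)
    _ = Real.exp (-(k:ℝ) * ((x:ℝ)/n) + -(r * ((x:ℝ)/n))) := (Real.exp_add _ _).symm
    _ = Real.exp (-(x : ℝ) / η) := by
        congr 1
        have hkr : (k:ℝ) + r = (n:ℝ)/η := by simp [r]
        have h3 : -(k:ℝ) * ((x:ℝ)/n) + -(r * ((x:ℝ)/n)) = -(((k:ℝ)+r) * ((x:ℝ)/n)) := by ring
        rw [h3, hkr]
        field_simp
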